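/- arXiv:math-ph/0512042 — 2 statements merged into one kernel-verified Lean document; each statement's English description precedes it below -/
import Mathlib

section
/- Let H and H₁ be complex Hilbert spaces and let ι : B(H) → B(H ⊕ H₁) be the degenerate representation ι(B)(η ⊕ η₁) = (Bη) ⊕ 0. Let Γ : B(H) → B(H ⊕ H₁) be a bounded linear map that is Hermitian (Γ(B*) = Γ(B)* for all B) and conditionally completely positive with respect to ι. Fix a unit vector η₀ ∈ H and any w ∈ H₁, and set v := η₀ ⊕ w ∈ H ⊕ H₁. Then there exists a bounded operator K on H ⊕ H₁ such that the map Φ(B) := Γ(B) + ι(B)∘K + K*∘ι(B) is completely positive and satisfies Φ(|η'⟩⟨η₀|) v = 0 for every η' ∈ H, where |η'⟩⟨η₀| denotes the rank-one operator η ↦ ⟨η₀, η⟩ η'. -/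
open ComplexOrder

local notation "⟪" x ", " y "⟫" => @inner ℂ _ _ x y

set_option linter.unusedSectionVars false
set_option maxHeartbeats 1000000

namespace Stmt1Aux

variable {H H₁ : Type*}
    [NormedAddCommGroup H] [InnerProductSpace ℂ H] [CompleteSpace H]
    [NormedAddCommGroup H₁] [InnerProductSpace ℂ H₁] [CompleteSpace H₁]

/-- inclusion `H → H ⊕ H₁` as a CLM into the `L²` product. -/
noncomputable def eW : H →L[ℂ] WithLp 2 (H × H₁) :=
  ((WithLp.prodContinuousLinearEquiv 2 ℂ H H₁).symm :
      (H × H₁) →L[ℂ] WithLp 2 (H × H₁)).comp (ContinuousLinearMap.inl ℂ H H₁)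

/-- projection `H ⊕ H₁ → H` as a CLM. -/
noncomputable def pW : WithLp 2 (H × H₁) →L[ℂ] H :=
  (ContinuousLinearMap.fst ℂ H H₁).comp
    ((WithLp.prodContinuousLinearEquiv 2 ℂ H H₁) :
      WithLp 2 (H × H₁) →L[ℂ] (H × H₁))

lemma eW_apply (y : H) :
    (eW y : WithLp 2 (H × H₁)) = (WithLp.equiv 2 (H × H₁)).symm (y, 0) := rfl

lemma pW_apply (u : WithLp 2 (H × H₁)) :
    pW u = ((WithLp.equiv 2 (H × H₁)) u).1 := rfl

@[simp] lemma pW_eW (y : H) : pW (eW (H₁ := H₁) y) = y := rfl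

lemma inner_eW_left (y : H) (u : WithLp 2 (H × H₁)) : ⟪eW y, u⟫ = ⟪y, pW u⟫ := by
  rw [WithLp.prod_inner_apply]
  show ⟪y, _⟫ + ⟪(0 : H₁), _⟫ = _
  simp [pW_apply]

lemma inner_eW_right (u : WithLp 2 (H × H₁)) (y : H) : ⟪u, eW y⟫ = ⟪pW u, y⟫ := by
  rw [← inner_conj_symm, inner_eW_left, inner_conj_symm]

lemma adjoint_pW : ContinuousLinearMap.adjoint (pW (H := H) (H₁ := H₁)) = eW := by
  symm
  rw [ContinuousLinearMap.eq_adjoint_iff]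
  exact inner_eW_left

lemma adjoint_eW : ContinuousLinearMap.adjoint (eW (H := H) (H₁ := H₁)) = pW := by
  rw [← adjoint_pW, ContinuousLinearMap.adjoint_adjoint]

/-- rank-one map `y ↦ |y⟩⟨η₀|` as a CLM. -/
noncomputable def rr (η₀ : H) : H →L[ℂ] (H →L[ℂ] H) :=
  ContinuousLinearMap.smulRightL ℂ H H (innerSL ℂ η₀)

lemma rr_apply (η₀ y : H) : rr η₀ y = (innerSL ℂ η₀).smulRight y := rfl

lemma rr_apply₂ (η₀ y η : H) : rr η₀ y η = ⟪η₀, η⟫ • y := rfl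

lemma adjoint_rr (η₀ y : H) :
    ContinuousLinearMap.adjoint (rr η₀ y) = (innerSL ℂ y).smulRight η₀ := by
  symm
  rw [ContinuousLinearMap.eq_adjoint_iff]
  intro a b
  simp only [ContinuousLinearMap.smulRight_apply, innerSL_apply_apply, rr_apply₂,
    inner_smul_left, inner_smul_right, inner_conj_symm]
  ring

lemma comp_rr (η₀ : H) (A : H →L[ℂ] H) (y : H) : A * rr η₀ y = rr η₀ (A y) := by
  ext η
  simp [ContinuousLinearMap.mul_apply, rr_apply₂]

lemma adjoint_rr_comp (η₀ x : H) (A : H →L[ℂ] H) :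
    ContinuousLinearMap.adjoint (rr η₀ x) * A =
      ContinuousLinearMap.adjoint (rr η₀ (ContinuousLinearMap.adjoint A x)) := by
  ext η
  simp only [adjoint_rr, ContinuousLinearMap.mul_apply,
    ContinuousLinearMap.smulRight_apply, innerSL_apply_apply,
    ContinuousLinearMap.adjoint_inner_left]

lemma adjoint_rr_comp_rr (η₀ x : H) :
    ContinuousLinearMap.adjoint (rr η₀ x) * rr η₀ x = ⟪x, x⟫ • rr η₀ η₀ := by
  ext η
  simp only [adjoint_rr, ContinuousLinearMap.mul_apply, rr_apply₂,
    ContinuousLinearMap.smulRight_apply, innerSL_apply_apply,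
    ContinuousLinearMap.smul_apply, inner_smul_right, smul_smul]
  ring_nf

end Stmt1Aux

open Stmt1Aux

/-- A Hermitian, conditionally completely positive (w.r.t. the degenerate
representation `ι`) bounded linear map `Γ : B(H) → B(H ⊕ H₁)` can be written as
`Γ(B) = Φ(B) − ι(B)K − K*ι(B)` where `Φ(B) = Γ(B) + ι(B)K + K*ι(B)` is completely
positive and satisfies `Φ(|η'⟩⟨η₀|) v = 0` for all `η'`, with `v = η₀ ⊕ w`. -/
theorem stmt1 {H H₁ : Type*}
    [NormedAddCommGroup H] [InnerProductSpace ℂ H] [CompleteSpace H]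
    [NormedAddCommGroup H₁] [InnerProductSpace ℂ H₁] [CompleteSpace H₁]
    (ι : (H →L[ℂ] H) → (WithLp 2 (H × H₁) →L[ℂ] WithLp 2 (H × H₁)))
    (hι : ∀ (B : H →L[ℂ] H) (η : WithLp 2 (H × H₁)),
      ι B η = (WithLp.equiv 2 (H × H₁)).symm (B ((WithLp.equiv 2 (H × H₁)) η).1, 0))
    (Γ : (H →L[ℂ] H) →L[ℂ] (WithLp 2 (H × H₁) →L[ℂ] WithLp 2 (H × H₁)))
    (hherm : ∀ B : H →L[ℂ] H,
      Γ (ContinuousLinearMap.adjoint B) = ContinuousLinearMap.adjoint (Γ B))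
    (hccp : ∀ (n : ℕ) (B : Fin n → H →L[ℂ] H) (ζ : Fin n → WithLp 2 (H × H₁)),
      (∑ k, ι (B k) (ζ k)) = 0 →
      0 ≤ ∑ k, ∑ l, ⟪ζ k, Γ (ContinuousLinearMap.adjoint (B k) * B l) (ζ l)⟫)
    (η₀ : H) (hη₀ : ‖η₀‖ = 1) (w : H₁) :
    ∃ K : WithLp 2 (H × H₁) →L[ℂ] WithLp 2 (H × H₁),
      (∀ (n : ℕ) (B : Fin n → H →L[ℂ] H) (ζ : Fin n → WithLp 2 (H × H₁)),
        0 ≤ ∑ k, ∑ l, ⟪ζ k,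
          (Γ (ContinuousLinearMap.adjoint (B k) * B l)
            + (ι (ContinuousLinearMap.adjoint (B k) * B l)).comp K
            + (ContinuousLinearMap.adjoint K).comp
                (ι (ContinuousLinearMap.adjoint (B k) * B l))) (ζ l)⟫) ∧
      (∀ η' : H,
        (Γ ((innerSL ℂ η₀).smulRight η')
          + (ι ((innerSL ℂ η₀).smulRight η')).comp K
          + (ContinuousLinearMap.adjoint K).comp (ι ((innerSL ℂ η₀).smulRight η')))
          ((WithLp.equiv 2 (H × H₁)).symm (η₀, w)) = 0) := by
  classical
  -- notation
  set v : WithLp 2 (H × H₁) := (WithLp.equiv 2 (H × H₁)).symm (η₀, w) with hv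
  have hη₀' : ⟪η₀, η₀⟫ = 1 := by
    rw [inner_self_eq_norm_sq_to_K, hη₀]; norm_num
  have hpv : pW v = η₀ := by rw [pW_apply]; rfl
  -- ι in terms of eW, pW
  have hι' : ∀ (B : H →L[ℂ] H) (u : WithLp 2 (H × H₁)), ι B u = eW (B (pW u)) := by
    intro B u; rw [hι, eW_apply, pW_apply]
  -- the map J : y ↦ Γ(|y⟩⟨η₀|) v
  set J : H →L[ℂ] WithLp 2 (H × H₁) := (Γ.comp (rr η₀)).flip v with hJdef
  have hJ : ∀ y, J y = Γ (rr η₀ y) v := fun _ => rfl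
  set c : ℂ := ⟪v, Γ (rr η₀ η₀) v⟫ with hcdef
  -- c is real
  have hrr_self_adj : ContinuousLinearMap.adjoint (rr η₀ η₀) = rr η₀ η₀ := by
    rw [adjoint_rr, rr_apply]
  have hc : (starRingEnd ℂ) c = c := by
    rw [hcdef, inner_conj_symm, ← ContinuousLinearMap.adjoint_inner_right,
      ← hherm, hrr_self_adj]
  have hc2 : (starRingEnd ℂ) (c / 2) = c / 2 := by
    rw [map_div₀, hc, Complex.conj_ofNat]
  -- the operator K
  set K : WithLp 2 (H × H₁) →L[ℂ] WithLp 2 (H × H₁) :=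
    (c / 2) • (eW.comp pW) - ContinuousLinearMap.adjoint (J.comp pW) with hKdef
  have hKapp : ∀ u, K u = (c / 2) • eW (pW u)
      - ContinuousLinearMap.adjoint (J.comp pW) u := fun _ => rfl
  -- the adjoint of K
  have hadjK : ContinuousLinearMap.adjoint K = (c / 2) • (eW.comp pW) - J.comp pW := by
    symm
    rw [ContinuousLinearMap.eq_adjoint_iff]
    intro x y
    rw [hKapp]
    simp only [ContinuousLinearMap.sub_apply, ContinuousLinearMap.smul_apply,
      ContinuousLinearMap.comp_apply, inner_sub_left, inner_sub_right,
      inner_smul_left, inner_smul_right, inner_eW_left, inner_eW_right, hc2,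
      ContinuousLinearMap.adjoint_inner_right, pW_eW]
  -- key inner-product computation for K
  have hKey : ∀ (y : H) (ζ : WithLp 2 (H × H₁)),
      ⟪eW y, K ζ⟫ = c / 2 * ⟪y, pW ζ⟫ - ⟪J y, ζ⟫ := by
    intro y ζ
    rw [hKapp, inner_sub_right, inner_smul_right, inner_eW_left, pW_eW,
      ContinuousLinearMap.adjoint_inner_right, ContinuousLinearMap.comp_apply, pW_eW]
  have hJv : ∀ y, ⟪J y, v⟫ = (starRingEnd ℂ) ⟪v, J y⟫ := fun y => (inner_conj_symm _ _).symm
  refine ⟨K, ?_, ?_⟩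
  case _ =>
    intro n B ζ
    set x : H := ∑ l, (B l) (pW (ζ l)) with hxdef
    -- the extra row/column making the family conditionally null
    have h0 : ι (rr η₀ x) (-v) = -(eW x) := by
      rw [hι', map_neg, hpv, rr_apply₂, inner_neg_right, hη₀']
      simp
    have h1 : ∑ k, ι (B k) (ζ k) = eW x := by
      simp only [hι']
      rw [hxdef, map_sum]
    have hsum0 : ∑ k : Fin (n + 1),
        ι ((Fin.cons (rr η₀ x) B : Fin (n + 1) → H →L[ℂ] H) k)
          ((Fin.cons (-v) ζ : Fin (n + 1) → WithLp 2 (H × H₁)) k) = 0 := by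
      rw [Fin.sum_univ_succ]
      simp only [Fin.cons_zero, Fin.cons_succ]
      rw [h0, h1, neg_add_cancel]
    -- pointwise values of the extra terms
    have hDval : ⟪-v, Γ (ContinuousLinearMap.adjoint (rr η₀ x) * rr η₀ x) (-v)⟫
        = ⟪x, x⟫ * c := by
      rw [adjoint_rr_comp_rr, map_smul, ContinuousLinearMap.smul_apply,
        inner_smul_right, map_neg, inner_neg_neg, ← hcdef]
    have hAval : ∀ l : Fin n,
        ⟪-v, Γ (ContinuousLinearMap.adjoint (rr η₀ x) * B l) (ζ l)⟫
          = -⟪J (ContinuousLinearMap.adjoint (B l) x), ζ l⟫ := by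
      intro l
      rw [adjoint_rr_comp, hherm, inner_neg_left,
        ContinuousLinearMap.adjoint_inner_right, ← hJ]
    have hCval : ∀ k : Fin n,
        ⟪ζ k, Γ (ContinuousLinearMap.adjoint (B k) * rr η₀ x) (-v)⟫
          = -⟪ζ k, J (ContinuousLinearMap.adjoint (B k) x)⟫ := by
      intro k
      rw [comp_rr, map_neg, inner_neg_right, ← hJ]
    -- the two correction double sums
    have hT1 : ∀ l : Fin n,
        ∑ k, ⟪ζ k, ι (ContinuousLinearMap.adjoint (B k) * B l) (K (ζ l))⟫
          = c / 2 * ⟪x, B l (pW (ζ l))⟫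
            - ⟪J (ContinuousLinearMap.adjoint (B l) x), ζ l⟫ := by
      intro l
      have h2 : ∀ k : Fin n,
          ⟪ζ k, ι (ContinuousLinearMap.adjoint (B k) * B l) (K (ζ l))⟫
            = ⟪B k (pW (ζ k)), B l (pW (K (ζ l)))⟫ := by
        intro k
        rw [hι', ContinuousLinearMap.mul_apply, inner_eW_right,
          ContinuousLinearMap.adjoint_inner_right]
      rw [Finset.sum_congr rfl (fun k _ => h2 k), ← sum_inner, ← hxdef,
        ← ContinuousLinearMap.adjoint_inner_left (A := B l), ← inner_eW_left, hKey,
        ContinuousLinearMap.adjoint_inner_left]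
    have hU1 : ∑ k, ∑ l,
        ⟪ζ k, ι (ContinuousLinearMap.adjoint (B k) * B l) (K (ζ l))⟫
          = c / 2 * ⟪x, x⟫
            - ∑ l, ⟪J (ContinuousLinearMap.adjoint (B l) x), ζ l⟫ := by
      rw [Finset.sum_comm, Finset.sum_congr rfl (fun l _ => hT1 l),
        Finset.sum_sub_distrib, ← Finset.mul_sum, ← inner_sum, ← hxdef]
    have hT2 : ∀ k : Fin n,
        ∑ l, ⟪ζ k, ContinuousLinearMap.adjoint K
            (ι (ContinuousLinearMap.adjoint (B k) * B l) (ζ l))⟫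
          = c / 2 * ⟪B k (pW (ζ k)), x⟫
            - ⟪ζ k, J (ContinuousLinearMap.adjoint (B k) x)⟫ := by
      intro k
      have h2 : ∀ l : Fin n,
          ⟪ζ k, ContinuousLinearMap.adjoint K
              (ι (ContinuousLinearMap.adjoint (B k) * B l) (ζ l))⟫
            = ⟪B k (pW (K (ζ k))), B l (pW (ζ l))⟫ := by
        intro l
        rw [ContinuousLinearMap.adjoint_inner_right, hι', ContinuousLinearMap.mul_apply,
          inner_eW_right, ContinuousLinearMap.adjoint_inner_right]
      rw [Finset.sum_congr rfl (fun l _ => h2 l), ← inner_sum, ← hxdef,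
        ← ContinuousLinearMap.adjoint_inner_right (A := B k), ← inner_eW_right,
        ← inner_conj_symm, hKey, map_sub, map_mul, hc2, inner_conj_symm, inner_conj_symm,
        ContinuousLinearMap.adjoint_inner_right]
    have hU2 : ∑ k, ∑ l,
        ⟪ζ k, ContinuousLinearMap.adjoint K
            (ι (ContinuousLinearMap.adjoint (B k) * B l) (ζ l))⟫
          = c / 2 * ⟪x, x⟫
            - ∑ k, ⟪ζ k, J (ContinuousLinearMap.adjoint (B k) x)⟫ := by
      rw [Finset.sum_congr rfl (fun k _ => hT2 k), Finset.sum_sub_distrib,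
        ← Finset.mul_sum, ← sum_inner, ← hxdef]
    refine le_of_le_of_eq
      (hccp (n + 1) (Fin.cons (rr η₀ x) B) (Fin.cons (-v) ζ) hsum0) ?_
    simp only [Fin.sum_univ_succ, Fin.cons_zero, Fin.cons_succ,
      ContinuousLinearMap.add_apply, ContinuousLinearMap.comp_apply, inner_add_right,
      Finset.sum_add_distrib, hDval, hAval, hCval]
    rw [hU1, hU2]
    simp only [Finset.sum_neg_distrib]
    ring
  case _ =>
    intro η'
    have hrEq : (innerSL ℂ η₀).smulRight η' = rr η₀ η' := rfl
    rw [hrEq]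
    simp only [ContinuousLinearMap.add_apply, ContinuousLinearMap.comp_apply, hadjK]
    have hιv : ι (rr η₀ η') v = eW η' := by
      rw [hι', hpv, rr_apply₂, hη₀', one_smul]
    have h1 : ι (rr η₀ η') (K v) = (-(c / 2)) • eW η' := by
      rw [hι', rr_apply₂]
      rw [← inner_eW_left, hKey, hpv, hη₀', hJv η₀, hJ, ← hcdef, hc, map_smul]
      congr 1
      ring
    rw [hιv, h1, ContinuousLinearMap.sub_apply, ContinuousLinearMap.smul_apply,
      ContinuousLinearMap.comp_apply, ContinuousLinearMap.comp_apply, pW_eW, hJ]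
    module
end

section
/- Let H be a complex Hilbert space, and for each t > 0 let φₜ : B(H) → B(H) be a completely positive linear map. Suppose λ : B(H) → B(H) is a linear map such that for every B ∈ B(H) and all ζ, ζ' ∈ H one has (1/t)( ⟨ζ, φₜ(B) ζ'⟩ − ⟨ζ, B ζ'⟩ ) → ⟨ζ, λ(B) ζ'⟩ as t → 0⁺. Then: (i) λ is conditionally completely positive, i.e. for every finite family B₁,…,Bₙ ∈ B(H) and ζ₁,…,ζₙ ∈ H with Σₖ Bₖ ζₖ = 0 one has Σₖ,ₗ ⟨ζₖ, λ(Bₖ* Bₗ) ζₗ⟩ ≥ 0; and (ii) if in addition φₜ(I) ≤ I for all t > 0, then λ(I) ≤ 0 (i.e. ⟨η, λ(I) η⟩ ≤ 0 for all η ∈ H). -/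
open ComplexOrder

local notation "⟪" x ", " y "⟫" => @inner ℂ _ _ x y

/-- If `λ` is the pointwise (weak) derivative at `t = 0⁺` of a family of
completely positive maps `φₜ` with `φ₀ = id`, then `λ` is conditionally completely
positive; and if moreover `φₜ(I) ≤ I` for all `t > 0`, then `λ(I) ≤ 0`. -/
theorem stmt3 {H : Type*}
    [NormedAddCommGroup H] [InnerProductSpace ℂ H] [CompleteSpace H]
    (φ : ℝ → (H →L[ℂ] H) →ₗ[ℂ] (H →L[ℂ] H))
    (hcp : ∀ t : ℝ, 0 < t →
      ∀ (n : ℕ) (B : Fin n → H →L[ℂ] H) (ζ : Fin n → H),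
        0 ≤ ∑ k, ∑ l, ⟪ζ k, φ t (ContinuousLinearMap.adjoint (B k) * B l) (ζ l)⟫)
    (lam : (H →L[ℂ] H) →ₗ[ℂ] (H →L[ℂ] H))
    (hder : ∀ (B : H →L[ℂ] H) (ζ ζ' : H),
      Filter.Tendsto (fun t : ℝ => (1 / (t : ℂ)) * (⟪ζ, φ t B ζ'⟫ - ⟪ζ, B ζ'⟫))
        (nhdsWithin 0 (Set.Ioi 0)) (nhds ⟪ζ, lam B ζ'⟫)) :
    (∀ (n : ℕ) (B : Fin n → H →L[ℂ] H) (ζ : Fin n → H),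
      (∑ k, B k (ζ k)) = 0 →
      0 ≤ ∑ k, ∑ l, ⟪ζ k, lam (ContinuousLinearMap.adjoint (B k) * B l) (ζ l)⟫) ∧
    ((∀ t : ℝ, 0 < t → ∀ η : H, ⟪η, φ t 1 η⟫ ≤ ⟪η, η⟫) →
      ∀ η : H, ⟪η, lam 1 η⟫ ≤ 0) := by
  constructor
  · intro n B ζ hζ
    -- the sum of the derivatives is the limit of (1/t)(S t - S 0)
    have hsum : Filter.Tendsto
        (fun t : ℝ => ∑ k, ∑ l, (1 / (t : ℂ)) *
          (⟪ζ k, φ t (ContinuousLinearMap.adjoint (B k) * B l) (ζ l)⟫ -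
            ⟪ζ k, (ContinuousLinearMap.adjoint (B k) * B l) (ζ l)⟫))
        (nhdsWithin 0 (Set.Ioi 0))
        (nhds (∑ k, ∑ l, ⟪ζ k, lam (ContinuousLinearMap.adjoint (B k) * B l) (ζ l)⟫)) := by
      refine tendsto_finset_sum _ fun k _ => tendsto_finset_sum _ fun l _ => ?_
      exact hder _ _ _
    -- the t = 0 sum vanishes
    have hS0 : ∀ k l : Fin n,
        ⟪ζ k, (ContinuousLinearMap.adjoint (B k) * B l) (ζ l)⟫ = ⟪B k (ζ k), B l (ζ l)⟫ := by
      intro k l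
      simp [ContinuousLinearMap.mul_apply, ContinuousLinearMap.adjoint_inner_right]
    have hzero : ∑ k, ∑ l,
        ⟪ζ k, (ContinuousLinearMap.adjoint (B k) * B l) (ζ l)⟫ = 0 := by
      have : ∑ k, ∑ l, ⟪B k (ζ k), B l (ζ l)⟫
          = ⟪∑ k, B k (ζ k), ∑ l, B l (ζ l)⟫ := by
        rw [sum_inner]
        exact Finset.sum_congr rfl fun k _ => (inner_sum _ _ _).symm
      simp only [hS0, this, hζ, inner_zero_left]
    refine ge_of_tendsto hsum ?_
    filter_upwards [self_mem_nhdsWithin] with t ht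
    have htpos : (0 : ℝ) < t := ht
    have h1 : 0 ≤ ∑ k, ∑ l,
        ⟪ζ k, φ t (ContinuousLinearMap.adjoint (B k) * B l) (ζ l)⟫ := hcp t htpos n B ζ
    have : ∑ k, ∑ l, (1 / (t : ℂ)) *
          (⟪ζ k, φ t (ContinuousLinearMap.adjoint (B k) * B l) (ζ l)⟫ -
            ⟪ζ k, (ContinuousLinearMap.adjoint (B k) * B l) (ζ l)⟫)
        = (1 / (t : ℂ)) * ((∑ k, ∑ l,
            ⟪ζ k, φ t (ContinuousLinearMap.adjoint (B k) * B l) (ζ l)⟫) - (∑ k, ∑ l,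
            ⟪ζ k, (ContinuousLinearMap.adjoint (B k) * B l) (ζ l)⟫)) := by
      simp [Finset.mul_sum, mul_sub, Finset.sum_sub_distrib]
    rw [this, hzero, sub_zero]
    have hinv : 0 ≤ (1 / (t : ℂ)) := by
      rw [Complex.le_def]
      constructor
      · simp [one_div]
        positivity
      · simp
    exact mul_nonneg hinv h1
  · intro hsub η
    refine le_of_tendsto (hder 1 η η) ?_
    filter_upwards [self_mem_nhdsWithin] with t ht
    have htpos : (0 : ℝ) < t := ht
    have h1 : ⟪η, φ t 1 η⟫ - ⟪η, (1 : H →L[ℂ] H) η⟫ ≤ 0 := by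
      have := hsub t htpos η
      simpa [ContinuousLinearMap.one_apply, sub_nonpos] using this
    have hinv : 0 ≤ (1 / (t : ℂ)) := by
      rw [Complex.le_def]
      constructor
      · simp [one_div]
        positivity
      · simp
    exact mul_nonpos_of_nonneg_of_nonpos hinv h1
end
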